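/- arXiv:1312.2226 — 2 statements merged into one kernel-verified Lean document; each statement's English description precedes it below -/
import Mathlib

section
/- Let (U, S) be a Set-Cover instance with U a finite nonempty universe and S = {S_1, …, S_m} a family of subsets of U with ⋃_{i=1}^m S_i = U, and let A(U, S) be the automaton with state set U ∪ {q̂}, alphabet {a_1, …, a_m}, δ(u, a_i) = q̂ if u ∈ S_i, δ(u, a_i) = u if u ∉ S_i, and δ(q̂, a_i) = q̂. Then a word w = a_{i_1} a_{i_2} ⋯ a_{i_t} is a reset word for A(U, S) if and only if S_{i_1} ∪ S_{i_2} ∪ ⋯ ∪ S_{i_t} = U. -/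
/-- The action of a word `w` on a state `q` in the DFA with transition function `δ`. -/
def wordAct {Q A : Type*} (δ : Q → A → Q) (q : Q) (w : List A) : Q :=
  w.foldl δ q

/-- `w` is a reset word: it sends all states to one common state. -/
def IsResetWord {Q A : Type*} (δ : Q → A → Q) (w : List A) : Prop :=
  ∀ p q : Q, wordAct δ p w = wordAct δ q w

/-- The Set-Cover automaton `A(U, S)`: states are `U ∪ {q̂}` (with `none` playing
the role of the sink state `q̂`), and the letter `a_i` sends `u` to `q̂` if `u ∈ S i`
and fixes `u` otherwise; `q̂` is fixed by all letters. -/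
def scAut {U : Type*} [DecidableEq U] {m : ℕ} (S : Fin m → Finset U) :
    Option U → Fin m → Option U
  | none, _ => none
  | some u, i => if u ∈ S i then none else some u

lemma scAut_none {U : Type*} [DecidableEq U] {m : ℕ} (S : Fin m → Finset U)
    (w : List (Fin m)) : wordAct (scAut S) none w = none := by
  induction w with
  | nil => rfl
  | cons a t ih => simpa [wordAct, scAut] using ih

lemma scAut_some {U : Type*} [DecidableEq U] {m : ℕ} (S : Fin m → Finset U)
    (w : List (Fin m)) (u : U) :
    wordAct (scAut S) (some u) w = none ↔ ∃ i ∈ w, u ∈ S i := by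
  induction w with
  | nil => simp [wordAct]
  | cons a t ih =>
    by_cases h : u ∈ S a
    · simp only [wordAct, List.foldl_cons, scAut, if_pos h]
      simpa [wordAct, h] using scAut_none S t
    · simpa [wordAct, scAut, h] using ih

/-- A word `w = a_{i₁} ⋯ a_{iₜ}` is a reset word for the Set-Cover automaton
`A(U, S)` if and only if `S_{i₁} ∪ ⋯ ∪ S_{iₜ} = U`. -/
theorem scAut_isResetWord_iff_cover {U : Type*} [Fintype U] [DecidableEq U]
    [Nonempty U] {m : ℕ} (S : Fin m → Finset U) (hcover : ∀ u : U, ∃ i, u ∈ S i)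
    (w : List (Fin m)) :
    IsResetWord (scAut S) w ↔ ∀ u : U, ∃ i ∈ w, u ∈ S i := by
  constructor
  · intro h u
    have := h (some u) none
    rw [scAut_none] at this
    exact (scAut_some S w u).mp this
  · intro h p q
    have key : ∀ r : Option U, wordAct (scAut S) r w = none := by
      rintro (_ | u)
      · exact scAut_none S w
      · exact (scAut_some S w u).mpr (h u)
    rw [key p, key q]
end

section
/- Fix a constant d > 0 and suppose f_2 is a function assigning to every 2-letter synchronizing automaton B with n' states a number f_2(B) with rt(B) ≤ f_2(B) ≤ d · ln(n') · rt(B). Let A = (Q, Σ, δ) be any synchronizing automaton with |Q| = n states and |Σ| = m ≥ 2 letters, m = 2^k, and let B(A) be the associated 2-letter automaton on Q × {0,1}^{≤ k} (with at most 2nm states) defined by δ'((q, w), x) = (q, wx) if |w| < k; δ'((q, w), 1) = (δ(q, a_{ℓ(w)}), λ) if |w| = k; δ'((q, w), 0) = (q, w) if |w| = k. Then rt(A) ≤ f_2(B(A)) / ⌈log₂ m + 1⌉ ≤ d · ln(2nm) · (rt(A) + 1). -/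
def Synchronizing {Q A : Type*} (δ : Q → A → Q) : Prop :=
  ∃ w : List A, IsResetWord δ w

noncomputable def resetThreshold {Q A : Type*} (δ : Q → A → Q) : ℕ :=
  sInf {n : ℕ | ∃ w : List A, w.length = n ∧ IsResetWord δ w}

/-- The value of a binary string read most-significant-bit first.  For strings of a
fixed length `k`, lexicographic order (with `false < true`) agrees with the order of
`bitVal`, so the lexicographic index `ℓ(w) ∈ {1, …, 2^k}` equals `bitVal w + 1`. -/
def bitVal : List Bool → ℕ
  | [] => 0
  | b :: t => (if b then 1 else 0) * 2 ^ t.length + bitVal t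

/-- The length-`k` binary string whose `bitVal` is `n % 2^k`; i.e. `ℓ⁻¹(n+1)` for `n < 2^k`. -/
def bits : ℕ → ℕ → List Bool
  | 0, _ => []
  | k + 1, n => decide (2 ^ k ≤ n % 2 ^ (k + 1)) :: bits k n

/-- The transition function of the 2-letter automaton `B(A)` on `Q × {0,1}^{≤k}`:
if `|w| < k` the letter is appended; if `|w| = k`, letter `1` applies the letter
`a_{ℓ(w)}` of `A` and resets the string to `λ`, while letter `0` does nothing. -/
def deltaB {Q : Type*} (k : ℕ) (δ : Q → Fin (2 ^ k) → Q) :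
    Q × {w : List Bool // w.length ≤ k} → Bool →
      Q × {w : List Bool // w.length ≤ k} :=
  fun s x =>
    if h : s.2.val.length < k then
      (s.1, ⟨s.2.val ++ [x], by simpa using h⟩)
    else if x then
      (δ s.1 ⟨bitVal s.2.val % 2 ^ k, Nat.mod_lt _ (by positivity)⟩,
        ⟨[], by simp⟩)
    else s

/- ## auxiliary lemmas -/

lemma wordAct_append {Q A : Type*} (δ : Q → A → Q) (q : Q) (u v : List A) :
    wordAct δ q (u ++ v) = wordAct δ (wordAct δ q u) v :=
  List.foldl_append

lemma wordAct_cons {Q A : Type*} (δ : Q → A → Q) (q : Q) (a : A) (u : List A) :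
    wordAct δ q (a :: u) = wordAct δ (δ q a) u := rfl

lemma bits_length (k n : ℕ) : (bits k n).length = k := by
  induction k with
  | zero => rfl
  | succ k ih => simp [bits, ih]

lemma bitVal_bits (k n : ℕ) : bitVal (bits k n) = n % 2 ^ k := by
  induction k with
  | zero => simp [bits, bitVal, Nat.mod_one]
  | succ k ih =>
    have hpos : 0 < 2 ^ k := by positivity
    have h1 : n % 2 ^ (k + 1) % 2 ^ k = n % 2 ^ k :=
      Nat.mod_mod_of_dvd _ (pow_dvd_pow 2 (Nat.le_succ k))
    have h2 : n % 2 ^ (k + 1) < 2 * 2 ^ k := by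
      have h' : n % 2 ^ (k + 1) < 2 ^ (k + 1) := Nat.mod_lt _ (by positivity)
      have : (2:ℕ) ^ (k + 1) = 2 ^ k * 2 := pow_succ 2 k
      omega
    have h5 := Nat.div_add_mod (n % 2 ^ (k + 1)) (2 ^ k)
    rw [h1] at h5
    simp only [bits, bitVal, bits_length, ih, decide_eq_true_eq]
    by_cases h : 2 ^ k ≤ n % 2 ^ (k + 1)
    · have hlt : n % 2 ^ (k + 1) / 2 ^ k < 2 := Nat.div_lt_of_lt_mul (by omega)
      have hge : 1 ≤ n % 2 ^ (k + 1) / 2 ^ k := (Nat.one_le_div_iff hpos).2 h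
      have hd : n % 2 ^ (k + 1) / 2 ^ k = 1 := by omega
      rw [hd, Nat.mul_one] at h5
      rw [if_pos h]
      omega
    · have hd : n % 2 ^ (k + 1) / 2 ^ k = 0 := Nat.div_eq_of_lt (by omega)
      rw [hd, Nat.mul_zero, Nat.zero_add] at h5
      rw [if_neg h]
      omega

/- ## decoding -/

def decode (k : ℕ) : List Bool → List Bool → List (Fin (2 ^ k))
  | _, [] => []
  | v, x :: rest =>
    if v.length < k then decode k (v ++ [x]) rest
    else if x then
      ⟨bitVal v % 2 ^ k, Nat.mod_lt _ (by positivity)⟩ ::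
        decode k [] rest
    else decode k v rest

lemma decode_fst {Q : Type*} (k : ℕ) (δ : Q → Fin (2 ^ k) → Q) (w : List Bool) :
    ∀ (q : Q) (v : List Bool) (hv : v.length ≤ k),
      (wordAct (deltaB k δ) (q, ⟨v, hv⟩) w).1 = wordAct δ q (decode k v w) := by
  induction w with
  | nil => intro q v hv; simp [wordAct, decode]
  | cons x rest ih =>
    intro q v hv
    rw [wordAct_cons]
    by_cases h : v.length < k
    · have hstep : deltaB k δ (q, ⟨v, hv⟩) x =
        (q, ⟨v ++ [x], by simpa using h⟩) := by
        simp [deltaB, h]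
      rw [hstep, ih, decode]
      simp [h]
    · by_cases hx : x
      · subst hx
        have hstep : deltaB k δ (q, ⟨v, hv⟩) true =
            (δ q ⟨bitVal v % 2 ^ k, Nat.mod_lt _ (by positivity)⟩,
              ⟨[], by simp⟩) := by
          simp [deltaB, h]
        rw [hstep, ih, decode]
        simp [h, wordAct_cons]
      · simp only [Bool.not_eq_true] at hx; subst hx
        have hstep : deltaB k δ (q, ⟨v, hv⟩) false = (q, ⟨v, hv⟩) := by
          simp [deltaB, h]
        rw [hstep, ih, decode]
        simp [h]

lemma decode_length (k : ℕ) (w : List Bool) :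
    ∀ (v : List Bool), v.length ≤ k →
      (k + 1) * (decode k v w).length ≤ w.length + v.length := by
  induction w with
  | nil => intro v hv; simp [decode]
  | cons x rest ih =>
    intro v hv
    rw [decode]
    by_cases h : v.length < k
    · rw [if_pos h]
      have h' := ih (v ++ [x]) (by simpa using h)
      simp only [List.length_append, List.length_cons, List.length_nil] at h' ⊢
      omega
    · have hvk : v.length = k := by omega
      rw [if_neg h]
      by_cases hx : x
      · subst hx
        rw [if_pos rfl, List.length_cons, Nat.mul_succ]
        have h' := ih [] (by simp)
        simp only [List.length_nil, Nat.add_zero] at h'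
        simp only [List.length_cons]
        omega
      · simp only [Bool.not_eq_true] at hx; subst hx
        rw [if_neg (by simp)]
        have h' := ih v hv
        simp only [List.length_cons]
        omega

/- ## encoding -/

def encode (k : ℕ) : List (Fin (2 ^ k)) → List Bool
  | [] => []
  | a :: u => (bits k a.val ++ [true]) ++ encode k u

lemma encode_length (k : ℕ) (u : List (Fin (2 ^ k))) :
    (encode k u).length = (k + 1) * u.length := by
  induction u with
  | nil => simp [encode]
  | cons a u ih => simp [encode, ih, bits_length]; ring

lemma fill {Q : Type*} (k : ℕ) (δ : Q → Fin (2 ^ k) → Q) (bs : List Bool) :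
    ∀ (q : Q) (v : List Bool) (hv : v.length ≤ k) (h : v.length + bs.length ≤ k),
      wordAct (deltaB k δ) (q, ⟨v, hv⟩) bs =
        (q, ⟨v ++ bs, by simpa using h⟩) := by
  induction bs with
  | nil => intro q v hv h; simp [wordAct]
  | cons x bs ih =>
    intro q v hv h
    simp only [List.length_cons] at h
    have hlt : v.length < k := by omega
    rw [wordAct_cons]
    have hstep : deltaB k δ (q, ⟨v, hv⟩) x = (q, ⟨v ++ [x], by simpa using hlt⟩) := by
      simp [deltaB, hlt]
    rw [hstep, ih q (v ++ [x]) (by simpa using hlt) (by simp; omega)]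
    simp

lemma enc_step {Q : Type*} (k : ℕ) (δ : Q → Fin (2 ^ k) → Q) (q : Q) (a : Fin (2 ^ k)) :
    wordAct (deltaB k δ) (q, ⟨[], by simp⟩) (bits k a.val ++ [true]) =
      (δ q a, ⟨[], by simp⟩) := by
  have hbl : (bits k a.val).length = k := bits_length _ _
  rw [wordAct_append,
    fill k δ (bits k a.val) q [] (by simp) (by rw [List.length_nil, hbl]; omega)]
  have hnl : ¬ (([] : List Bool) ++ bits k a.val).length < k := by
    rw [List.nil_append, hbl]; omega
  show deltaB k δ _ true = _
  simp only [deltaB, hnl, dite_false, dif_neg, not_false_iff, if_true]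
  have hval : ∀ h, (⟨bitVal (([] : List Bool) ++ bits k a.val) % 2 ^ k, h⟩ : Fin (2 ^ k)) = a := by
    intro h
    apply Fin.ext
    simp [bitVal_bits, Nat.mod_eq_of_lt a.isLt]
  rw [hval]

lemma enc_word {Q : Type*} (k : ℕ) (δ : Q → Fin (2 ^ k) → Q) (u : List (Fin (2 ^ k))) :
    ∀ q : Q, wordAct (deltaB k δ) (q, ⟨[], by simp⟩) (encode k u) =
      (wordAct δ q u, ⟨[], by simp⟩) := by
  induction u with
  | nil => intro q; simp [encode, wordAct]
  | cons a u ih =>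
    intro q
    rw [encode, wordAct_append, enc_step, ih, wordAct_cons]

lemma zeros {Q : Type*} (k : ℕ) (δ : Q → Fin (2 ^ k) → Q) (m : ℕ) :
    ∀ s, (wordAct (deltaB k δ) s (List.replicate m false)).1 = s.1 ∧
      (wordAct (deltaB k δ) s (List.replicate m false)).2.val.length
        = min k (s.2.val.length + m) := by
  induction m with
  | zero =>
    intro s
    have h2 : s.2.val.length ≤ k := s.2.property
    simp [wordAct]
    omega
  | succ m ih =>
    intro s
    rw [List.replicate_succ, wordAct_cons]
    by_cases h : s.2.val.length < k
    · have hstep : deltaB k δ s false = (s.1, ⟨s.2.val ++ [false], by simpa using h⟩) := by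
        simp [deltaB, h]
      rw [hstep]
      have := ih (s.1, ⟨s.2.val ++ [false], by simpa using h⟩)
      simp only [List.length_append, List.length_singleton] at this
      exact ⟨this.1, by rw [this.2]; omega⟩
    · have hstep : deltaB k δ s false = s := by simp [deltaB, h]
      rw [hstep]
      have := ih s
      have hk : s.2.val.length = k := by
        have h2 : s.2.val.length ≤ k := s.2.property
        omega
      exact ⟨this.1, by rw [this.2]; omega⟩

lemma norm_word {Q : Type*} (k : ℕ) (δ : Q → Fin (2 ^ k) → Q) (s) :
    ∃ q : Q, wordAct (deltaB k δ) s (List.replicate k false ++ [true]) =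
      (q, ⟨[], by simp⟩) := by
  rw [wordAct_append]
  set t := wordAct (deltaB k δ) s (List.replicate k false) with ht
  have hz := zeros k δ k s
  have hlen : t.2.val.length = k := by
    rw [← ht] at hz
    have := s.2.property
    omega
  have hnl : ¬ t.2.val.length < k := by omega
  refine ⟨(deltaB k δ t true).1, ?_⟩
  rw [show wordAct (deltaB k δ) t [true] = deltaB k δ t true from rfl]
  have : deltaB k δ t true =
      (δ t.1 ⟨bitVal t.2.val % 2 ^ k, Nat.mod_lt _ (by positivity)⟩,
        ⟨[], by simp⟩) := by
    simp [deltaB, hnl]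
  rw [this]

/- ## padding injection for cardinality -/

def pad (k : ℕ) (w : List Bool) : List Bool :=
  w ++ true :: List.replicate (k - w.length) false

lemma dropWhile_rep (m : ℕ) (t : List Bool) :
    List.dropWhile (fun b => !b) (List.replicate m false ++ true :: t) = true :: t := by
  induction m with
  | zero => simp [List.dropWhile]
  | succ m ih => simpa [List.replicate_succ, List.dropWhile] using ih

lemma pad_injective (k : ℕ) : Function.Injective (pad k) := by
  intro w1 w2 h
  have h1 : ∀ w : List Bool,
      ((List.dropWhile (fun b => !b) (pad k w).reverse).tail).reverse = w := by
    intro w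
    simp only [pad, List.reverse_append, List.reverse_cons, List.reverse_replicate]
    rw [List.append_assoc, List.singleton_append, dropWhile_rep]
    simp
  rw [← h1 w1, ← h1 w2, h]

lemma pad_length (k : ℕ) (w : List Bool) (hw : w.length ≤ k) :
    (pad k w).length = k + 1 := by
  simp [pad]; omega

noncomputable instance bufFinite (k : ℕ) : Finite {w : List Bool // w.length ≤ k} := by
  apply Finite.of_injective
    (fun w : {w : List Bool // w.length ≤ k} =>
      (fun i : Fin (k + 1) => (pad k w.val).getD i false))
  intro w1 w2 h
  apply Subtype.ext
  apply pad_injective k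
  apply List.ext_getElem
  · rw [pad_length k _ w1.2, pad_length k _ w2.2]
  · intro i h1 h2
    have := congrFun h ⟨i, by rwa [pad_length k _ w1.2] at h1⟩
    simpa [List.getD, List.getElem?_eq_getElem, h1, h2] using this

lemma buf_card_le (k : ℕ) :
    Nat.card {w : List Bool // w.length ≤ k} ≤ 2 ^ (k + 1) := by
  have := Nat.card_le_card_of_injective
    (β := Fin (k + 1) → Bool)
    (fun w : {w : List Bool // w.length ≤ k} =>
      (fun i : Fin (k + 1) => (pad k w.val).getD i false))
    (by
      intro w1 w2 h
      apply Subtype.ext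
      apply pad_injective k
      apply List.ext_getElem
      · rw [pad_length k _ w1.2, pad_length k _ w2.2]
      · intro i h1 h2
        have := congrFun h ⟨i, by rwa [pad_length k _ w1.2] at h1⟩
        simpa [List.getD, List.getElem?_eq_getElem, h1, h2] using this)
  calc Nat.card {w : List Bool // w.length ≤ k} ≤ Nat.card (Fin (k + 1) → Bool) := this
    _ = 2 ^ (k + 1) := by simp [Nat.card_eq_fintype_card]

/-- If `f₂` approximates the reset threshold of 2-letter automata within factor
`d · ln(n')` (`n'` the number of states), then dividing its value on `B(A)` by
`⌈log₂ m + 1⌉ = k + 1` approximates `rt(A)`: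
`rt(A) ≤ f₂(B(A)) / (k+1) ≤ d · ln(2nm) · (rt(A)+1)`. -/
theorem approximation_transfer {Q : Type} [Fintype Q] [Nonempty Q] (k : ℕ)
    (hk : 1 ≤ k) (δ : Q → Fin (2 ^ k) → Q) (hsync : Synchronizing δ)
    (d : ℝ) (hd : 0 < d) (f₂B : ℝ)
    (hf₂_lower : (resetThreshold (deltaB k δ) : ℝ) ≤ f₂B)
    (hf₂_upper : f₂B ≤
      d * Real.log (Nat.card (Q × {w : List Bool // w.length ≤ k})) *
        (resetThreshold (deltaB k δ) : ℝ)) :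
    (resetThreshold δ : ℝ) ≤ f₂B / (k + 1) ∧
    f₂B / (k + 1) ≤
      d * Real.log (2 * Fintype.card Q * 2 ^ k) * ((resetThreshold δ : ℝ) + 1) := by
  -- the reset threshold of δ is attained
  obtain ⟨u, hulen, hu⟩ : ∃ u : List (Fin (2 ^ k)),
      u.length = resetThreshold δ ∧ IsResetWord δ u := by
    obtain ⟨w, hw⟩ := hsync
    have : ({n : ℕ | ∃ w : List (Fin (2 ^ k)), w.length = n ∧ IsResetWord δ w}).Nonempty :=
      ⟨w.length, w, rfl, hw⟩
    obtain ⟨w', h1, h2⟩ := Nat.sInf_mem this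
    exact ⟨w', h1, h2⟩
  -- B is synchronizing, with rt(B) ≤ (k+1)(rt(δ)+1)
  set W : List Bool := (List.replicate k false ++ [true]) ++ encode k u with hW
  have hWreset : IsResetWord (deltaB k δ) W := by
    intro s t
    obtain ⟨qs, hqs⟩ := norm_word k δ s
    obtain ⟨qt, hqt⟩ := norm_word k δ t
    rw [hW,
      wordAct_append (deltaB k δ) s (List.replicate k false ++ [true]) (encode k u),
      wordAct_append (deltaB k δ) t (List.replicate k false ++ [true]) (encode k u),
      hqs, hqt, enc_word, enc_word, hu qs qt]
  have hWlen : W.length = (k + 1) * (resetThreshold δ + 1) := by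
    simp [hW, encode_length, hulen]
    ring
  have hBle : resetThreshold (deltaB k δ) ≤ (k + 1) * (resetThreshold δ + 1) :=
    Nat.sInf_le ⟨W, hWlen, hWreset⟩
  -- rt(B) is attained
  obtain ⟨w, hwlen, hwreset⟩ : ∃ w : List Bool,
      w.length = resetThreshold (deltaB k δ) ∧ IsResetWord (deltaB k δ) w := by
    have : ({n : ℕ | ∃ w : List Bool, w.length = n ∧
        IsResetWord (deltaB k δ) w}).Nonempty := ⟨W.length, W, rfl, hWreset⟩
    obtain ⟨w', h1, h2⟩ := Nat.sInf_mem this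
    exact ⟨w', h1, h2⟩
  -- decode w is a reset word for δ
  have hdec : IsResetWord δ (decode k [] w) := by
    intro p q
    have := hwreset (p, ⟨[], by simp⟩) (q, ⟨[], by simp⟩)
    have h1 := congrArg Prod.fst this
    rwa [decode_fst k δ w p [] (by simp), decode_fst k δ w q [] (by simp)] at h1
  have hle1 : resetThreshold δ ≤ (decode k [] w).length :=
    Nat.sInf_le ⟨decode k [] w, rfl, hdec⟩
  have hle2 : (k + 1) * (decode k [] w).length ≤ resetThreshold (deltaB k δ) := by
    have := decode_length k w [] (by simp)
    simpa [hwlen] using this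
  have hkey : (k + 1) * resetThreshold δ ≤ resetThreshold (deltaB k δ) :=
    le_trans (Nat.mul_le_mul_left _ hle1) hle2
  -- real arithmetic
  have hK : (0:ℝ) < (k:ℝ) + 1 := by positivity
  constructor
  · rw [le_div_iff₀ hK]
    calc (resetThreshold δ : ℝ) * ((k:ℝ) + 1)
        = (((k + 1) * resetThreshold δ : ℕ) : ℝ) := by push_cast; ring
      _ ≤ (resetThreshold (deltaB k δ) : ℝ) := by exact_mod_cast hkey
      _ ≤ f₂B := hf₂_lower
  · rw [div_le_iff₀ hK]
    -- cardinality facts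
    have hcard1 : (1:ℝ) ≤ (Nat.card (Q × {w : List Bool // w.length ≤ k}) : ℝ) := by
      haveI : Nonempty (Q × {w : List Bool // w.length ≤ k}) :=
        ⟨(Classical.arbitrary Q, ⟨[], by simp⟩)⟩
      have : 0 < Nat.card (Q × {w : List Bool // w.length ≤ k}) :=
        Nat.card_pos (α := Q × {w : List Bool // w.length ≤ k})
      exact_mod_cast this
    have hcard2 : (Nat.card (Q × {w : List Bool // w.length ≤ k}) : ℝ)
        ≤ 2 * Fintype.card Q * 2 ^ k := by
      have h1 : Nat.card (Q × {w : List Bool // w.length ≤ k})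
          = Nat.card Q * Nat.card {w : List Bool // w.length ≤ k} := Nat.card_prod _ _
      have h2 := buf_card_le k
      have h3 : Nat.card Q = Fintype.card Q := Nat.card_eq_fintype_card
      have : Nat.card (Q × {w : List Bool // w.length ≤ k})
          ≤ Fintype.card Q * 2 ^ (k + 1) := by
        rw [h1, h3]
        exact Nat.mul_le_mul_left _ h2
      calc (Nat.card (Q × {w : List Bool // w.length ≤ k}) : ℝ)
          ≤ (Fintype.card Q * 2 ^ (k + 1) : ℕ) := by exact_mod_cast this
        _ = 2 * Fintype.card Q * 2 ^ k := by push_cast; ring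
    have hlog0 : 0 ≤ Real.log (Nat.card (Q × {w : List Bool // w.length ≤ k})) :=
      Real.log_nonneg hcard1
    have hlogle : Real.log (Nat.card (Q × {w : List Bool // w.length ≤ k}))
        ≤ Real.log (2 * Fintype.card Q * 2 ^ k) :=
      Real.log_le_log (by linarith) hcard2
    have hlog2 : 0 ≤ Real.log (2 * Fintype.card Q * 2 ^ k) := le_trans hlog0 hlogle
    have hB0 : (0:ℝ) ≤ (resetThreshold (deltaB k δ) : ℝ) := Nat.cast_nonneg _
    have hBle' : (resetThreshold (deltaB k δ) : ℝ)
        ≤ ((k:ℝ) + 1) * ((resetThreshold δ : ℝ) + 1) := by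
      calc (resetThreshold (deltaB k δ) : ℝ)
          ≤ (((k + 1) * (resetThreshold δ + 1) : ℕ) : ℝ) := by exact_mod_cast hBle
        _ = ((k:ℝ) + 1) * ((resetThreshold δ : ℝ) + 1) := by push_cast; ring
    calc f₂B ≤ d * Real.log (Nat.card (Q × {w : List Bool // w.length ≤ k})) *
          (resetThreshold (deltaB k δ) : ℝ) := hf₂_upper
      _ ≤ d * Real.log (2 * Fintype.card Q * 2 ^ k) *
          (resetThreshold (deltaB k δ) : ℝ) := by
        apply mul_le_mul_of_nonneg_right _ hB0
        exact mul_le_mul_of_nonneg_left hlogle (le_of_lt hd)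
      _ ≤ d * Real.log (2 * Fintype.card Q * 2 ^ k) *
          (((k:ℝ) + 1) * ((resetThreshold δ : ℝ) + 1)) := by
        apply mul_le_mul_of_nonneg_left hBle'
        positivity
      _ = d * Real.log (2 * Fintype.card Q * 2 ^ k) * ((resetThreshold δ : ℝ) + 1) *
          ((k:ℝ) + 1) := by ring
end
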